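/- Suppose block 1 contains at least two indices, i.e. #{r : b r = 1} ≥ 2. Then for every derivation f of N, every A ∈ N^{12}, and all indices r, s with b r = 2 and b s = t, the entry f(A) r s is zero. -/

import Mathlib

/-- `A` is a strictly block upper triangular matrix relative to the block function `b`
(index `r` lies in block `b r`): `A r s = 0` whenever `b r ≥ b s`. -/
def InN {F : Type*} [Field F] {n : ℕ} (b : Fin n → ℕ)
    (A : Matrix (Fin n) (Fin n) F) : Prop :=
  ∀ r s, b s ≤ b r → A r s = 0

/-- `A` lies in the `(i,j)` block `N^{ij}`: `A r s = 0` unless `b r = i` and `b s = j`. -/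
def InBlk {F : Type*} [Field F] {n : ℕ} (b : Fin n → ℕ) (i j : ℕ)
    (A : Matrix (Fin n) (Fin n) F) : Prop :=
  ∀ r s, ¬(b r = i ∧ b s = j) → A r s = 0

/-- `f` is a derivation of the Lie algebra `N` of strictly block upper triangular matrices:
it maps `N` into `N` and satisfies `f [X,Y] = [f X, Y] + [X, f Y]` on `N`,
where `[X,Y] = XY - YX`. -/
def IsDerN {F : Type*} [Field F] {n : ℕ} (b : Fin n → ℕ)
    (f : Matrix (Fin n) (Fin n) F →ₗ[F] Matrix (Fin n) (Fin n) F) : Prop :=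
  (∀ A, InN b A → InN b (f A)) ∧
  ∀ X Y, InN b X → InN b Y →
    f (X * Y - Y * X) = (f X * Y - Y * f X) + (X * f Y - f Y * X)

open Matrix in
lemma key7 {F : Type*} [Field F] {n t : ℕ} (b : Fin n → ℕ) (ht : 3 ≤ t)
    (f : Matrix (Fin n) (Fin n) F →ₗ[F] Matrix (Fin n) (Fin n) F)
    (hf : IsDerN b f)
    (A : Matrix (Fin n) (Fin n) F) (hA : InBlk b 1 2 A)
    (p r s : Fin n) (hp : b p = 1) (hr : b r = 2) (hs : b s = t) :
    f A r s = (A * f (Matrix.single p r (1:F))) p s := by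
  set X := Matrix.single p r (1:F) with hXdef
  have hXapp : ∀ u v, X u v = if p = u ∧ r = v then 1 else 0 := by
    intro u v; simp [hXdef, Matrix.single, Matrix.of_apply]
  have hXN : InN b X := by
    intro u v huv
    rw [hXapp]
    by_cases h : p = u ∧ r = v
    · obtain ⟨h1, h2⟩ := h; subst h1; subst h2; omega
    · simp [h]
  have hAN : InN b A := by
    intro u v huv
    exact hA u v (by rintro ⟨h1, h2⟩; omega)
  have hXA : X * A = 0 := by
    ext u v
    rw [Matrix.mul_apply, Matrix.zero_apply]
    apply Finset.sum_eq_zero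
    intro c _
    rw [hXapp]
    by_cases h : p = u ∧ r = c
    · obtain ⟨h1, h2⟩ := h
      have : A c v = 0 := hA c v (by rintro ⟨h3, _⟩; rw [← h2] at h3; omega)
      simp [this]
    · simp [h]
  have hAX : A * X = 0 := by
    ext u v
    rw [Matrix.mul_apply, Matrix.zero_apply]
    apply Finset.sum_eq_zero
    intro c _
    rw [hXapp]
    by_cases h : p = c ∧ r = v
    · obtain ⟨h1, h2⟩ := h
      have : A u c = 0 := hA u c (by rintro ⟨_, h3⟩; rw [← h1] at h3; omega)
      simp [this]
    · simp [h]
  have h0 := hf.2 X A hXN hAN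
  rw [hXA, hAX, sub_zero, map_zero] at h0
  have h1 := congrArg (fun M => M p s) h0.symm
  simp only [Matrix.add_apply, Matrix.sub_apply, Matrix.zero_apply] at h1
  have e1 : (f X * A) p s = 0 := by
    rw [Matrix.mul_apply]
    apply Finset.sum_eq_zero
    intro c _
    have : A c s = 0 := hA c s (by rintro ⟨_, h3⟩; omega)
    simp [this]
  have e2 : (f A * X) p s = 0 := by
    rw [Matrix.mul_apply]
    apply Finset.sum_eq_zero
    intro c _
    rw [hXapp]
    have : ¬ (p = c ∧ r = s) := by rintro ⟨_, h3⟩; subst h3; omega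
    simp [this]
  have e3 : (X * f A) p s = f A r s := by
    rw [Matrix.mul_apply]
    rw [Finset.sum_eq_single r]
    · rw [hXapp]; simp
    · intro c _ hc
      rw [hXapp, if_neg (by rintro ⟨_, h3⟩; exact hc h3.symm), zero_mul]
    · simp
  rw [e1, e2, e3] at h1
  linear_combination h1

/-- if block 1 has at least two indices, then for every derivation `f` of `N`
the `(2,t)` block of `f(N^{12})` vanishes. -/
theorem stmt7 {F : Type*} [Field F] {n t : ℕ} (b : Fin n → ℕ)
    (hn : 1 ≤ n) (ht : 3 ≤ t) (hmono : Monotone b)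
    (hlb : ∀ r, 1 ≤ b r) (hub : ∀ r, b r ≤ t)
    (hsurj : ∀ k, 1 ≤ k → k ≤ t → ∃ r, b r = k)
    (hrow : 2 ≤ (Finset.univ.filter fun r => b r = 1).card)
    (f : Matrix (Fin n) (Fin n) F →ₗ[F] Matrix (Fin n) (Fin n) F)
    (hf : IsDerN b f) :
    ∀ A, InBlk b 1 2 A → ∀ r s, b r = 2 → b s = t → f A r s = 0 := by
  intro A hA r s hr hs
  obtain ⟨p, q, hpmem, hqmem, hpq⟩ := Finset.one_lt_card_iff.mp (lt_of_lt_of_le one_lt_two hrow)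
  have hp : b p = 1 := (Finset.mem_filter.mp hpmem).2
  have hq : b q = 1 := (Finset.mem_filter.mp hqmem).2
  rw [key7 b ht f hf A hA p r s hp hr hs]
  rw [Matrix.mul_apply]
  apply Finset.sum_eq_zero
  intro c _
  by_cases hc : b c = 2
  · have hstd : InBlk b 1 2 (Matrix.single p r (1:F)) := by
      intro u v huv
      have : ¬ (p = u ∧ r = v) := by
        rintro ⟨h1, h2⟩; subst h1; subst h2; exact huv ⟨hp, hr⟩
      simp [Matrix.single, this]
    rw [key7 b ht f hf _ hstd q c s hq hc hs]
    rw [Matrix.mul_apply]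
    rw [Finset.sum_eq_zero, mul_zero]
    intro d _
    have : Matrix.single p r (1:F) q d = 0 := by
      have : ¬ (p = q ∧ r = d) := by rintro ⟨h1, _⟩; exact hpq h1
      simp [Matrix.single, this]
    simp [this]
  · have : A p c = 0 := hA p c (by rintro ⟨_, h3⟩; exact hc h3)
    simp [this]
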